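/- Fix integers m ≥ 3 and n ≥ 1, and define the escalation data E(k), U(k), A(k), NU(k) as in the context. Then for every k ≥ 1 and every nondecreasing k-tuple a of positive integers, the m-gonal form given by a is new tight T(n)-universal if and only if a ∈ NU(k). -/

import Mathlib

/-- `s` is a generalized `m`-gonal number, i.e. `s = ((m-2)u^2 - (m-4)u)/2` for some `u ∈ ℤ`. -/
def IsGP (m s : ℤ) : Prop := ∃ u : ℤ, 2 * s = (m - 2) * u ^ 2 - (m - 4) * u

/-- `R'(a)`: the set of nonzero integers represented by the `m`-gonal form with
coefficient sequence `a`, i.e. expressible as `a₁s₁ + ⋯ + aₖsₖ` with each `sᵢ ∈ GP_m`. -/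
def Rset (m : ℤ) (a : List ℤ) : Set ℤ :=
  {x | x ≠ 0 ∧ ∃ s : List ℤ, s.length = a.length ∧ (∀ y ∈ s, IsGP m y) ∧
      x = (List.zipWith (· * ·) a s).sum}

/-- One escalation step: from a set `S` of (sorted) coefficient tuples, form all tuples
`a * g` where `a ∈ S` is non-universal with `ψ(a)` the least element of `T(n) \ R'(a)`
and `g ∈ ℰ(a) = {g : n ≤ g ≤ ψ(a) - n} ∪ {ψ(a)}`. -/
def escStep (m n : ℤ) (S : Set (List ℤ)) : Set (List ℤ) :=
  {l | ∃ a ∈ S, ∃ ψ : ℤ, IsLeast (Set.Ici n \ Rset m a) ψ ∧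
        ∃ g : ℤ, ((n ≤ g ∧ g ≤ ψ - n) ∨ g = ψ) ∧ l = List.orderedInsert (· ≤ ·) g a}

/-- The escalation sets `E(k)` (with `E(0) = ∅` for convenience): `E(1) = {(n)}` and
`E(k+1)` is obtained by escalating the non-universal members of `E(k)`. -/
def Eset (m n : ℤ) : ℕ → Set (List ℤ)
  | 0 => ∅
  | 1 => {[n]}
  | (k + 2) => escStep m n (Eset m n (k + 1))

/-- `U(k)`: the members of `E(k)` which are tight `T(n)`-universal (`ψ(a) = ∞`,
i.e. `T(n) ⊆ R'(a)`). -/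
def Uset (m n : ℤ) (k : ℕ) : Set (List ℤ) :=
  {a ∈ Eset m n k | Set.Ici n ⊆ Rset m a}

/-- `A(k) = E(k) \ U(k)`. -/
def Aset (m n : ℤ) (k : ℕ) : Set (List ℤ) := Eset m n k \ Uset m n k

/-- `NU(k)`: the members `a` of `U(k)` such that no proper (sorted) subsequence of `a`
belongs to `U(i)` for some `i < k`. -/
def NUset (m n : ℤ) (k : ℕ) : Set (List ℤ) :=
  {a ∈ Uset m n k | ∀ b : List ℤ, List.Sublist b a → b ≠ a → ∀ i, i < k → b ∉ Uset m n i}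

lemma isGP_zero (m : ℤ) : IsGP m 0 := ⟨0, by ring⟩
lemma isGP_one (m : ℤ) : IsGP m 1 := ⟨1, by ring⟩

lemma isGP_nonneg {m s : ℤ} (hm : 3 ≤ m) (h : IsGP m s) : 0 ≤ s := by
  obtain ⟨u, hu⟩ := h
  rcases le_or_gt u 0 with h0 | h0
  · nlinarith [sq_nonneg u, mul_nonneg (by linarith : (0:ℤ) ≤ m - 3) (by nlinarith [sq_nonneg u] : (0:ℤ) ≤ u ^ 2 - u)]
  · nlinarith [mul_nonneg (by linarith : (0:ℤ) ≤ m - 3) (by nlinarith : (0:ℤ) ≤ u ^ 2 - u)]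

def R0 (m : ℤ) : List ℤ → Set ℤ
  | [] => {0}
  | h :: t => {x | ∃ s y, IsGP m s ∧ y ∈ R0 m t ∧ x = h * s + y}

lemma zero_mem_R0 (m : ℤ) : ∀ a : List ℤ, (0 : ℤ) ∈ R0 m a
  | [] => rfl
  | h :: t => ⟨0, 0, isGP_zero m, zero_mem_R0 m t, by ring⟩

lemma repr_iff (m : ℤ) : ∀ (a : List ℤ) (x : ℤ),
    (∃ s : List ℤ, s.length = a.length ∧ (∀ y ∈ s, IsGP m y) ∧
      x = (List.zipWith (· * ·) a s).sum) ↔ x ∈ R0 m a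
  | [], x => by
    constructor
    · rintro ⟨s, hlen, -, rfl⟩
      simp [R0]
    · rintro hx
      exact ⟨[], rfl, by simp, by simpa [R0] using hx⟩
  | h :: t, x => by
    constructor
    · rintro ⟨s, hlen, hgp, rfl⟩
      cases s with
      | nil => simp at hlen
      | cons s0 s' =>
        refine ⟨s0, (List.zipWith (· * ·) t s').sum, hgp s0 (by simp), ?_, by simp⟩
        exact (repr_iff m t _).1 ⟨s', by simpa using hlen, fun y hy => hgp y (by simp [hy]), rfl⟩
    · rintro ⟨s0, y, hgp, hy, rfl⟩
      obtain ⟨s', hlen, hgp', rfl⟩ := (repr_iff m t y).2 hy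
      exact ⟨s0 :: s', by simp [hlen], by intro z hz; rcases List.mem_cons.mp hz with rfl | hz; exacts [hgp, hgp' z hz], by simp⟩

lemma R0_perm (m : ℤ) {a b : List ℤ} (h : a.Perm b) : R0 m a = R0 m b := by
  induction h with
  | nil => rfl
  | cons x h ih => ext z; simp only [R0, Set.mem_setOf_eq, ih]
  | swap x y l =>
    ext z
    constructor
    · rintro ⟨s, w, hs, ⟨s', y', hs', hy', rfl⟩, rfl⟩
      exact ⟨s', _, hs', ⟨s, y', hs, hy', rfl⟩, by ring⟩
    · rintro ⟨s, w, hs, ⟨s', y', hs', hy', rfl⟩, rfl⟩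
      exact ⟨s', _, hs', ⟨s, y', hs, hy', rfl⟩, by ring⟩
  | trans h1 h2 ih1 ih2 => rw [ih1, ih2]

lemma R0_append (m : ℤ) : ∀ (c d : List ℤ) (x : ℤ),
    x ∈ R0 m (c ++ d) ↔ ∃ r t, r ∈ R0 m c ∧ t ∈ R0 m d ∧ x = r + t
  | [], d, x => by
    constructor
    · intro hx; exact ⟨0, x, rfl, by simpa using hx, by ring⟩
    · rintro ⟨r, t, hr, ht, rfl⟩
      have : r = 0 := hr
      simpa [this] using ht
  | h :: c, d, x => by
    constructor
    · rintro ⟨s, y, hs, hy, rfl⟩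
      obtain ⟨r, t, hr, ht, rfl⟩ := (R0_append m c d y).1 hy
      exact ⟨h * s + r, t, ⟨s, r, hs, hr, rfl⟩, ht, by ring⟩
    · rintro ⟨r, t, ⟨s, y, hs, hy, rfl⟩, ht, rfl⟩
      exact ⟨s, y + t, hs, (R0_append m c d _).2 ⟨y, t, hy, ht, rfl⟩, by ring⟩

lemma R0_mono (m : ℤ) {c b : List ℤ} (h : c.Sublist b) : R0 m c ⊆ R0 m b := by
  obtain ⟨d, hd⟩ := h.exists_perm_append
  intro x hx
  rw [R0_perm m hd, R0_append]
  exact ⟨x, 0, hx, zero_mem_R0 m d, by ring⟩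

lemma mem_R0_of_mem (m : ℤ) {g : ℤ} {b : List ℤ} (h : g ∈ b) : g ∈ R0 m b :=
  R0_mono m (List.singleton_sublist.2 h) ⟨1, 0, isGP_one m, rfl, by ring⟩

lemma R0_nonneg {m : ℤ} (hm : 3 ≤ m) : ∀ {d : List ℤ}, (∀ x ∈ d, (0:ℤ) ≤ x) →
    ∀ {t : ℤ}, t ∈ R0 m d → 0 ≤ t
  | [], _, t, ht => le_of_eq (ht.symm)
  | h :: d, hd, t, ht => by
    obtain ⟨s, y, hs, hy, rfl⟩ := ht
    have h1 : 0 ≤ h := hd h (by simp)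
    have h2 : 0 ≤ s := isGP_nonneg hm hs
    have h3 : 0 ≤ y := R0_nonneg hm (fun x hx => hd x (by simp [hx])) hy
    positivity

lemma R0_cases {m n : ℤ} (hm : 3 ≤ m) (hn : 1 ≤ n) : ∀ {d : List ℤ}, (∀ x ∈ d, n ≤ x) →
    ∀ {t : ℤ}, t ∈ R0 m d → t = 0 ∨ (∃ g ∈ d, t = g) ∨ (∃ g ∈ d, g + n ≤ t)
  | [], _, t, ht => Or.inl ht
  | h :: d, hd, t, ht => by
    obtain ⟨s, y, hs, hy, rfl⟩ := ht
    have hdn : ∀ x ∈ d, n ≤ x := fun x hx => hd x (by simp [hx])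
    have hd0 : ∀ x ∈ d, (0:ℤ) ≤ x := fun x hx => le_trans (by linarith) (hdn x hx)
    have h1 : n ≤ h := hd h (by simp)
    have h2 : 0 ≤ s := isGP_nonneg hm hs
    have h3 : 0 ≤ y := R0_nonneg hm hd0 hy
    rcases eq_or_lt_of_le h2 with hs0 | hs1
    · rcases R0_cases hm hn hdn hy with rfl | ⟨g, hg, heq⟩ | ⟨g, hg, hgt⟩
      · exact Or.inl (by rw [← hs0]; ring)
      · exact Or.inr (Or.inl ⟨g, by simp [hg], by rw [← hs0, heq]; ring⟩)
      · exact Or.inr (Or.inr ⟨g, by simp [hg], by rw [← hs0]; linarith⟩)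
    · rcases eq_or_lt_of_le (by omega : (1:ℤ) ≤ s) with hs0 | hs2
      · -- s = 1
        rcases R0_cases hm hn hdn hy with rfl | ⟨g, hg, heq⟩ | ⟨g, hg, hgt⟩
        · exact Or.inr (Or.inl ⟨h, by simp, by rw [← hs0]; ring⟩)
        · exact Or.inr (Or.inr ⟨h, by simp, by have := hdn g hg; rw [← hs0]; linarith⟩)
        · exact Or.inr (Or.inr ⟨g, by simp [hg], by rw [← hs0]; linarith⟩)
      · -- s ≥ 2
        refine Or.inr (Or.inr ⟨h, by simp, ?_⟩)
        nlinarith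

lemma R0_ge {m n : ℤ} (hm : 3 ≤ m) (hn : 1 ≤ n) {d : List ℤ} (hd : ∀ x ∈ d, n ≤ x)
    {t : ℤ} (ht : t ∈ R0 m d) (ht0 : t ≠ 0) : n ≤ t := by
  rcases R0_cases hm hn hd ht with rfl | ⟨g, hg, heq⟩ | ⟨g, hg, hgt⟩
  · exact absurd rfl ht0
  · exact heq ▸ hd g hg
  · have := hd g hg; linarith

lemma mem_Rset_iff {m : ℤ} {a : List ℤ} {x : ℤ} :
    x ∈ Rset m a ↔ x ≠ 0 ∧ x ∈ R0 m a := by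
  unfold Rset
  rw [Set.mem_setOf_eq, ← repr_iff]

lemma Rset_mono (m : ℤ) {c b : List ℤ} (h : c.Sublist b) : Rset m c ⊆ Rset m b := by
  intro x hx
  rw [mem_Rset_iff] at hx ⊢
  exact ⟨hx.1, R0_mono m h hx.2⟩

lemma Rset_subset_Ici {m n : ℤ} (hm : 3 ≤ m) (hn : 1 ≤ n) {a : List ℤ}
    (ha : ∀ x ∈ a, n ≤ x) : Rset m a ⊆ Set.Ici n := by
  intro x hx
  rw [mem_Rset_iff] at hx
  exact R0_ge hm hn ha hx.2 hx.1

/-- The key escalation step lemma. -/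
lemma escalation_lemma {m n : ℤ} (hm : 3 ≤ m) (hn : 1 ≤ n) {b c : List ℤ}
    (hcb : c.Sublist b) (hbn : ∀ x ∈ b, n ≤ x) {ψ : ℤ}
    (hψb : ψ ∈ R0 m b) (hψc : ψ ∉ R0 m c) :
    ∃ g, ((n ≤ g ∧ g ≤ ψ - n) ∨ g = ψ) ∧ List.Subperm (g :: c) b := by
  obtain ⟨d, hd⟩ := hcb.exists_perm_append
  have hdn : ∀ x ∈ d, n ≤ x := fun x hx => hbn x (hd.mem_iff.2 (List.mem_append.2 (Or.inr hx)))
  have hcn : ∀ x ∈ c, n ≤ x := fun x hx => hbn x (hcb.mem hx)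
  rw [R0_perm m hd, R0_append] at hψb
  obtain ⟨r, t, hr, ht, rfl⟩ := hψb
  have ht0 : t ≠ 0 := by rintro rfl; exact hψc (by simpa using hr)
  have hr0 : 0 ≤ r := R0_nonneg hm (fun x hx => le_trans (by linarith) (hcn x hx)) hr
  have hsub : ∀ g ∈ d, List.Subperm (g :: c) b := by
    intro g hg
    refine List.Subperm.trans ⟨c ++ [g], List.perm_append_comm, (List.singleton_sublist.2 hg).append_left c⟩ hd.symm.subperm
  rcases R0_cases hm hn hdn ht with rfl | ⟨g, hg, heq⟩ | ⟨g, hg, hgt⟩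
  · exact absurd rfl ht0
  · -- t = g for some g ∈ d
    rcases eq_or_ne r 0 with rfl | hr0'
    · exact ⟨g, Or.inr (by rw [heq]; ring), hsub g hg⟩
    · have hrn : n ≤ r := R0_ge hm hn hcn hr hr0'
      exact ⟨g, Or.inl ⟨heq ▸ hdn g hg, by rw [← heq]; linarith⟩, hsub g hg⟩
  · exact ⟨g, Or.inl ⟨hdn g hg, by linarith⟩, hsub g hg⟩

lemma Eset_succ (m n : ℤ) (k : ℕ) (hk : 1 ≤ k) :
    Eset m n (k + 1) = escStep m n (Eset m n k) := by
  obtain ⟨k', rfl⟩ : ∃ k', k = k' + 1 := ⟨k - 1, by omega⟩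
  rfl

lemma Eset_props {m n : ℤ} (hn : 1 ≤ n) :
    ∀ k, ∀ a ∈ Eset m n k, a.length = k ∧ a.Pairwise (· ≤ ·) ∧ ∀ x ∈ a, n ≤ x := by
  intro k
  induction k with
  | zero => intro a ha; exact absurd ha (by simp [Eset])
  | succ k ih =>
    rcases Nat.eq_zero_or_pos k with rfl | hk
    · intro a ha
      have : a = [n] := ha
      subst this
      exact ⟨rfl, List.pairwise_singleton (· ≤ ·) n, by intro x hx; simp at hx; omega⟩
    · intro a ha
      rw [Eset_succ m n k hk] at ha
      obtain ⟨c, hc, ψ, hψ, g, hg, rfl⟩ := ha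
      obtain ⟨hlen, hsort, hge⟩ := ih c hc
      have hgn : n ≤ g := by
        rcases hg with ⟨h1, -⟩ | rfl
        · exact h1
        · exact hψ.1.1
      refine ⟨by rw [List.orderedInsert_length, hlen], hsort.orderedInsert g c, ?_⟩
      intro x hx
      rcases (List.mem_orderedInsert _).1 hx with rfl | hx
      · exact hgn
      · exact hge x hx

lemma entries_ge {m n : ℤ} {a : List ℤ} (hpos : ∀ x ∈ a, 0 < x)
    (hR : Rset m a ⊆ Set.Ici n) : ∀ x ∈ a, n ≤ x := fun x hx =>
  hR (mem_Rset_iff.2 ⟨ne_of_gt (hpos x hx), mem_R0_of_mem m hx⟩)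

lemma n_mem_of_univ {m n : ℤ} (hm : 3 ≤ m) (hn : 1 ≤ n) {b : List ℤ}
    (hbn : ∀ x ∈ b, n ≤ x) (huniv : Set.Ici n ⊆ Rset m b) : n ∈ b := by
  have hnr : n ∈ Rset m b := huniv (le_refl n)
  rw [mem_Rset_iff] at hnr
  rcases R0_cases hm hn hbn hnr.2 with h0 | ⟨g, hg, heq⟩ | ⟨g, hg, hgt⟩
  · exact absurd h0 hnr.1
  · exact heq ▸ hg
  · exact ((by have := hbn g hg; linarith : False)).elim

lemma chain_lemma {m n : ℤ} (hm : 3 ≤ m) (hn : 1 ≤ n) {b : List ℤ}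
    (hsort : b.Pairwise (· ≤ ·)) (hbn : ∀ x ∈ b, n ≤ x) (hnb : n ∈ b)
    (huniv : Set.Ici n ⊆ Rset m b) :
    ∀ j : ℕ, 1 ≤ j → j ≤ b.length →
      ∃ c : List ℤ, c.Sublist b ∧ c ∈ Eset m n c.length ∧ 1 ≤ c.length ∧ c.length ≤ j ∧
        (Set.Ici n ⊆ Rset m c ∨ c.length = j) := by
  intro j
  induction j with
  | zero => omega
  | succ j ih =>
    intro _ hlen
    rcases Nat.eq_zero_or_pos j with rfl | hj
    · refine ⟨[n], List.singleton_sublist.2 hnb, ?_, by simp, by simp, Or.inr rfl⟩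
      show [n] ∈ Eset m n 1
      rfl
    · obtain ⟨c, hcb, hcE, hc1, hcj, hcu⟩ := ih hj (by omega)
      rcases hcu with hcu | hcl
      · exact ⟨c, hcb, hcE, hc1, by omega, Or.inl hcu⟩
      by_cases hcu : Set.Ici n ⊆ Rset m c
      · exact ⟨c, hcb, hcE, hc1, by omega, Or.inl hcu⟩
      have hne : ∃ z : ℤ, z ∈ Set.Ici n \ Rset m c := by
        rw [Set.not_subset] at hcu
        obtain ⟨z, hz1, hz2⟩ := hcu
        exact ⟨z, hz1, hz2⟩
      obtain ⟨ψ, hψ1, hψ2⟩ := Int.exists_least_of_bdd ⟨n, fun z hz => hz.1⟩ hne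
      have hleast : IsLeast (Set.Ici n \ Rset m c) ψ := ⟨hψ1, hψ2⟩
      have hψn : n ≤ ψ := hψ1.1
      have hψc : ψ ∉ R0 m c := fun h =>
        hψ1.2 (mem_Rset_iff.2 ⟨by intro h0; rw [h0] at hψn; omega, h⟩)
      have hψb : ψ ∈ R0 m b := (mem_Rset_iff.1 (huniv hψ1.1)).2
      obtain ⟨g, hg, hsub⟩ := escalation_lemma hm hn hcb hbn hψb hψc
      have csort : c.Pairwise (· ≤ ·) := hsort.sublist hcb
      have hperm : List.Perm (List.orderedInsert (· ≤ ·) g c) (g :: c) :=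
        List.perm_orderedInsert _ g c
      have hsub2 : List.Subperm (List.orderedInsert (· ≤ ·) g c) b := by
        obtain ⟨w, hw1, hw2⟩ := hsub
        exact ⟨w, hw1.trans hperm.symm, hw2⟩
      have hsl : (List.orderedInsert (· ≤ ·) g c).Sublist b :=
        List.sublist_of_subperm_of_pairwise hsub2 (csort.orderedInsert g c) hsort
      have hlen' : (List.orderedInsert (· ≤ ·) g c).length = j + 1 := by
        rw [List.orderedInsert_length, hcl]
      refine ⟨List.orderedInsert (· ≤ ·) g c, hsl, ?_, by omega, by omega, Or.inr hlen'⟩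
      rw [hlen', Eset_succ m n j hj]
      exact ⟨c, by rwa [hcl] at hcE, ψ, hleast, g, hg, rfl⟩

/-- A nondecreasing tuple `a` of positive integers of length `k ≥ 1` is new tight
`T(n)`-universal (i.e. `R'(a) = T(n)` and `R'(b) ⊊ T(n)` for every proper subsequence
`b` of `a`) if and only if `a ∈ NU(k)`. -/
theorem new_tight_universal_iff (m n : ℤ) (hm : 3 ≤ m) (hn : 1 ≤ n)
    (k : ℕ) (hk : 1 ≤ k) (a : List ℤ) (hlen : a.length = k)
    (hsort : a.Pairwise (· ≤ ·)) (hpos : ∀ x ∈ a, 0 < x) :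
    (Rset m a = Set.Ici n ∧
        ∀ b : List ℤ, List.Sublist b a → b ≠ a → Rset m b ⊂ Set.Ici n) ↔
      a ∈ NUset m n k := by
  constructor
  · rintro ⟨hR, hB⟩
    have huniv : Set.Ici n ⊆ Rset m a := hR.ge
    have hge : ∀ x ∈ a, n ≤ x := entries_ge hpos hR.le
    have hnb : n ∈ a := n_mem_of_univ hm hn hge huniv
    obtain ⟨c, hcb, hcE, hc1, hck, hcu⟩ :=
      chain_lemma hm hn hsort hge hnb huniv k hk (by omega)
    have hca : c = a := by
      rcases hcu with hcu | hcl
      · by_contra hne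
        exact (hB c hcb hne).not_subset hcu
      · exact hcb.eq_of_length (by rw [hcl, hlen])
    subst hca
    refine ⟨⟨by rwa [hlen] at hcE, huniv⟩, ?_⟩
    intro b hba hbne i hik hbU
    exact (hB b hba hbne).not_subset hbU.2
  · rintro ⟨⟨haE, haU⟩, hmin⟩
    have hge : ∀ x ∈ a, n ≤ x := (Eset_props hn k a haE).2.2
    have hRsub : Rset m a ⊆ Set.Ici n := Rset_subset_Ici hm hn hge
    refine ⟨le_antisymm hRsub haU, ?_⟩
    intro b hba hbne
    have hbsub : Rset m b ⊆ Set.Ici n := (Rset_mono m hba).trans hRsub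
    refine Set.ssubset_iff_subset_ne.2 ⟨hbsub, ?_⟩
    intro heq
    have hbuniv : Set.Ici n ⊆ Rset m b := heq.ge
    have hbge : ∀ x ∈ b, n ≤ x := fun x hx => hge x (hba.subset hx)
    have hbsort : b.Pairwise (· ≤ ·) := hsort.sublist hba
    have hnb : n ∈ b := n_mem_of_univ hm hn hbge hbuniv
    have hblt : b.length < k := by
      rw [← hlen]
      exact lt_of_le_of_ne hba.length_le (fun hh => hbne (hba.eq_of_length hh))
    obtain ⟨c, hcb, hcE, hc1, hck, hcu⟩ :=
      chain_lemma hm hn hbsort hbge hnb hbuniv b.length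
        (List.length_pos_iff.2 (List.ne_nil_of_mem hnb)) le_rfl
    have hcuniv : Set.Ici n ⊆ Rset m c := by
      rcases hcu with h | hcl
      · exact h
      · rw [hcb.eq_of_length hcl]; exact hbuniv
    have hcne : c ≠ a := by
      intro hce
      rw [hce, hlen] at hck
      omega
    exact hmin c (hcb.trans hba) hcne c.length (by omega) ⟨hcE, hcuniv⟩
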